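/- Let W ≠ 0 be a real number and L ≥ 1. Among all factorizations W = V_L ··· V_1 by real numbers V_1,...,V_L, the function F(V_1,...,V_L) = ∑_{I⊊{1,...,L}} η^{2(L−#I)} ∏_{m∈I} V_m² attains its minimum exactly when V_ℓ² = V_m² for all ℓ, m (equivalently |V_ℓ| = |W|^{1/L} for all ℓ), in which case its value equals ∑_{m=0}^{L−1} C(L,m) η^{2(L−m)} W^{2m/L}. -/

import Mathlib

open Finset

private lemma filter_mem_powersetCard_aux {α : Type*} [DecidableEq α] (s : Finset α) (x : α)
    (hx : x ∈ s) (k : ℕ) :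
    (s.powersetCard (k+1)).filter (fun I => x ∈ I)
      = ((s.erase x).powersetCard k).image (insert x) := by
  conv_lhs => rw [← insert_erase hx, powersetCard_succ_insert (notMem_erase x s)]
  ext I
  simp only [mem_filter, mem_union, mem_image]
  constructor
  · rintro ⟨hI | ⟨J, hJ, rfl⟩, hxI⟩
    · exact absurd ((mem_powersetCard.1 hI).1 hxI) (notMem_erase x s)
    · exact ⟨J, hJ, rfl⟩
  · rintro ⟨J, hJ, rfl⟩
    exact ⟨Or.inr ⟨J, hJ, rfl⟩, mem_insert_self x J⟩

private lemma card_filter_mem_powersetCard_aux {α : Type*} [DecidableEq α] (s : Finset α) (x : α)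
    (hx : x ∈ s) (k : ℕ) :
    ((s.powersetCard (k+1)).filter (fun I => x ∈ I)).card = (s.card - 1).choose k := by
  rw [filter_mem_powersetCard_aux s x hx k, card_image_of_injOn, card_powersetCard,
    card_erase_of_mem hx]
  intro I hI J hJ h
  have hxI : x ∉ I := fun h' => notMem_erase x s ((mem_powersetCard.1 hI).1 h')
  have hxJ : x ∉ J := fun h' => notMem_erase x s ((mem_powersetCard.1 hJ).1 h')
  rw [← erase_insert hxI, h, erase_insert hxJ]

private lemma prod_powersetCard_prod_aux (L k : ℕ) (a : Fin L → ℝ) :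
    ∏ I ∈ (univ : Finset (Fin L)).powersetCard (k+1), ∏ m ∈ I, a m
      = (∏ m, a m) ^ ((L-1).choose k) := by
  have h1 : ∀ I ∈ (univ : Finset (Fin L)).powersetCard (k+1),
      (∏ m ∈ I, a m) = ∏ m : Fin L, if m ∈ I then a m else 1 := by
    intro I hI
    rw [← prod_filter]
    congr 1
    simp [filter_mem_eq_inter]
  rw [prod_congr rfl h1, prod_comm, ← prod_pow]
  refine prod_congr rfl fun m _ => ?_
  rw [← prod_filter, prod_const, card_filter_mem_powersetCard_aux _ m (mem_univ m) k,
    Finset.card_fin]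

private lemma amgm_powersetCard_aux (L k : ℕ) (hk : k < L) (a : Fin L → ℝ) (ha : ∀ m, 0 < a m)
    (t : ℝ) (ht : 0 < t) (hprod : ∏ m, a m = t ^ L) :
    (L.choose k : ℝ) * t ^ k ≤ ∑ I ∈ (univ : Finset (Fin L)).powersetCard k, ∏ m ∈ I, a m := by
  rcases Nat.eq_zero_or_pos k with rfl | hk0
  · simp
  obtain ⟨j, rfl⟩ : ∃ j, k = j + 1 := ⟨k - 1, (Nat.succ_pred_eq_of_pos hk0).symm⟩
  set S := (univ : Finset (Fin L)).powersetCard (j+1) with hS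
  have hC : 0 < L.choose (j+1) := Nat.choose_pos hk.le
  have hCR : (0:ℝ) < (L.choose (j+1) : ℝ) := by exact_mod_cast hC
  have hcard : S.card = L.choose (j+1) := by
    rw [hS, card_powersetCard, Finset.card_fin]
  have hzpos : ∀ I ∈ S, (0:ℝ) < ∏ m ∈ I, a m :=
    fun I _ => prod_pos fun m _ => ha m
  have key := Real.geom_mean_le_arith_mean_weighted S (fun _ => ((L.choose (j+1) : ℝ))⁻¹)
      (fun I => ∏ m ∈ I, a m) (fun _ _ => by positivity)
      (by rw [sum_const, hcard, nsmul_eq_mul, mul_inv_cancel₀ hCR.ne'])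
      (fun I hI => (hzpos I hI).le)
  have hLHS : (∏ I ∈ S, (∏ m ∈ I, a m) ^ ((L.choose (j+1) : ℝ))⁻¹) = t ^ (j+1) := by
    rw [Real.finset_prod_rpow S _ (fun I hI => (hzpos I hI).le), hS,
      prod_powersetCard_prod_aux L j a, hprod, ← pow_mul]
    have hnat : L * (L-1).choose j = L.choose (j+1) * (j+1) := by
      have h' := Nat.add_one_mul_choose_eq (L-1) j
      have hL1 : L - 1 + 1 = L := by omega
      rw [hL1] at h'
      exact h'
    rw [hnat, mul_comm (L.choose (j+1)) (j+1), pow_mul,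
      ← Real.rpow_natCast (t ^ (j+1)) (L.choose (j+1)),
      ← Real.rpow_mul (by positivity), mul_inv_cancel₀ hCR.ne', Real.rpow_one]
  rw [hLHS] at key
  calc (L.choose (j+1) : ℝ) * t ^ (j+1)
      ≤ (L.choose (j+1) : ℝ) * ∑ I ∈ S, ((L.choose (j+1) : ℝ))⁻¹ * ∏ m ∈ I, a m :=
        mul_le_mul_of_nonneg_left key hCR.le
    _ = ∑ I ∈ S, ∏ m ∈ I, a m := by
        rw [← mul_sum, ← mul_assoc, mul_inv_cancel₀ hCR.ne', one_mul]

private lemma amgm_eq_case_aux (L : ℕ) (hL : 0 < L) (a : Fin L → ℝ) (ha : ∀ m, 0 < a m)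
    (t : ℝ) (ht : 0 < t) (hprod : ∏ m, a m = t ^ L)
    (hsum : ∑ m, a m ≤ L * t) : ∀ j k, a j = a k := by
  have hLR : (0:ℝ) < (L:ℝ) := by exact_mod_cast hL
  have key := strictConvexOn_exp.eq_of_le_map_sum (t := (univ : Finset (Fin L)))
      (w := fun _ => (L:ℝ)⁻¹) (p := fun m => Real.log (a m))
      (fun _ _ => by positivity)
      (by rw [sum_const, Finset.card_fin, nsmul_eq_mul, mul_inv_cancel₀ hLR.ne'])
      (fun _ _ => Set.mem_univ _) ?_
  · intro j k
    have := key (mem_univ j) (mem_univ k)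
    rw [← Real.exp_log (ha j), ← Real.exp_log (ha k), this]
  · have h1 : ∑ m, (L:ℝ)⁻¹ • Real.exp (Real.log (a m)) ≤ t := by
      simp only [smul_eq_mul]
      have hc : ∀ m : Fin L, (L:ℝ)⁻¹ * Real.exp (Real.log (a m)) = (L:ℝ)⁻¹ * a m := by
        intro m; rw [Real.exp_log (ha m)]
      rw [Finset.sum_congr rfl (fun m _ => hc m), ← mul_sum]
      calc (L:ℝ)⁻¹ * ∑ m, a m ≤ (L:ℝ)⁻¹ * ((L:ℝ) * t) :=
            mul_le_mul_of_nonneg_left hsum (by positivity)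
        _ = t := by field_simp
    have h2 : Real.exp (∑ m, (L:ℝ)⁻¹ • Real.log (a m)) = t := by
      simp only [smul_eq_mul]
      rw [← mul_sum, ← Real.log_prod (fun m _ => (ha m).ne'), hprod, Real.log_pow]
      rw [← mul_assoc, inv_mul_cancel₀ hLR.ne', one_mul, Real.exp_log ht]
    rw [h2]; exact h1

private lemma regularizer_main_aux (L : ℕ) (hL : 1 ≤ L) (η : ℝ) (hη : 0 < η) (a : Fin L → ℝ)
    (ha : ∀ m, 0 < a m) (t : ℝ) (ht : 0 < t) (hprod : ∏ m, a m = t ^ L) :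
    (∑ k ∈ Finset.range L, (L.choose k : ℝ) * η ^ (2*(L-k)) * t ^ k)
      ≤ (∑ I ∈ (univ : Finset (Fin L)).powerset.erase univ,
          η ^ (2*(L - I.card)) * ∏ m ∈ I, a m)
    ∧ ((∑ I ∈ (univ : Finset (Fin L)).powerset.erase univ,
          η ^ (2*(L - I.card)) * ∏ m ∈ I, a m)
        = ∑ k ∈ Finset.range L, (L.choose k : ℝ) * η ^ (2*(L-k)) * t ^ k
      ↔ ∀ j k, a j = a k) := by
  classical
  have hcardU : (univ : Finset (Fin L)).card = L := Finset.card_fin L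
  set F : Finset (Fin L) → ℝ := fun I => η ^ (2*(L - I.card)) * ∏ m ∈ I, a m with hF
  have hterm : ∀ k, ∑ I ∈ (univ : Finset (Fin L)).powersetCard k, F I
      = η ^ (2*(L-k)) * ∑ I ∈ (univ : Finset (Fin L)).powersetCard k, ∏ m ∈ I, a m := by
    intro k
    rw [mul_sum]
    exact sum_congr rfl fun I hI => by
      simp only [hF]; rw [(mem_powersetCard.1 hI).2]
  have hsplit : (∑ I ∈ (univ : Finset (Fin L)).powerset.erase univ, F I)
      = ∑ k ∈ Finset.range L, η ^ (2*(L-k)) *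
          ∑ I ∈ (univ : Finset (Fin L)).powersetCard k, ∏ m ∈ I, a m := by
    have h0 : ∑ I ∈ (univ : Finset (Fin L)).powerset, F I
        = ∑ k ∈ Finset.range (L+1),
            ∑ I ∈ (univ : Finset (Fin L)).powersetCard k, F I := by
      rw [powerset_card_biUnion, sum_biUnion ((pairwise_disjoint_powersetCard _).set_pairwise _)]
      rw [hcardU]
    have hpcL : ∑ I ∈ (univ : Finset (Fin L)).powersetCard L, F I = F univ := by
      have h := powersetCard_self (univ : Finset (Fin L))
      rw [hcardU] at h
      rw [h, sum_singleton]
    have h1 := Finset.add_sum_erase _ F (Finset.mem_powerset_self (univ : Finset (Fin L)))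
    have h2 : ∑ I ∈ (univ : Finset (Fin L)).powerset.erase univ, F I
        = ∑ k ∈ Finset.range L, ∑ I ∈ (univ : Finset (Fin L)).powersetCard k, F I := by
      have := h0
      rw [Finset.sum_range_succ, hpcL, ← h1] at this
      linarith
    rw [h2]
    exact sum_congr rfl fun k _ => hterm k
  have hle : ∀ k ∈ Finset.range L, (L.choose k : ℝ) * η ^ (2*(L-k)) * t ^ k
      ≤ η ^ (2*(L-k)) * ∑ I ∈ (univ : Finset (Fin L)).powersetCard k, ∏ m ∈ I, a m := by
    intro k hk
    have h := amgm_powersetCard_aux L k (mem_range.1 hk) a ha t ht hprod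
    calc (L.choose k : ℝ) * η ^ (2*(L-k)) * t ^ k
        = η ^ (2*(L-k)) * ((L.choose k : ℝ) * t ^ k) := by ring
      _ ≤ _ := mul_le_mul_of_nonneg_left h (by positivity)
  refine ⟨by rw [hsplit]; exact Finset.sum_le_sum hle, ?_, ?_⟩
  · intro heq
    rw [hsplit] at heq
    have hterm' := (Finset.sum_eq_sum_iff_of_le hle).1 heq.symm
    rcases eq_or_lt_of_le hL with hL1 | hL2
    · intro j k
      have hj := j.isLt
      have hk := k.isLt
      have : j = k := by apply Fin.ext; omega
      rw [this]
    · have h1 : 1 ∈ Finset.range L := mem_range.2 (by omega)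
      have hk1 := hterm' 1 h1
      have hpc1 : ∑ I ∈ (univ : Finset (Fin L)).powersetCard 1, ∏ m ∈ I, a m
          = ∑ m, a m := by
        rw [powersetCard_one, Finset.sum_map]
        simp
      rw [hpc1] at hk1
      have hη' : η ^ (2*(L-1)) ≠ 0 := by positivity
      have h2 : η ^ (2*(L-1)) * ((L:ℝ) * t) = η ^ (2*(L-1)) * ∑ m, a m := by
        rw [← hk1, Nat.choose_one_right]; ring
      have hsum : ∑ m, a m = (L:ℝ) * t := (mul_left_cancel₀ hη' h2).symm
      exact amgm_eq_case_aux L (by omega) a ha t ht hprod hsum.le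
  · intro hbal
    have hat : ∀ m, a m = t := by
      intro m
      have h1 : a m ^ L = t ^ L := by
        rw [← hprod,
          show (∏ x, a x) = ∏ _x : Fin L, a m from Finset.prod_congr rfl fun x _ => hbal x m,
          Finset.prod_const, Finset.card_fin]
      exact (pow_left_inj₀ (ha m).le ht.le (by omega)).1 h1
    rw [hsplit]
    refine Finset.sum_congr rfl fun k _ => ?_
    have h3 : ∑ I ∈ (univ : Finset (Fin L)).powersetCard k, ∏ m ∈ I, a m
        = (L.choose k : ℝ) * t ^ k := by
      have h4 : ∀ I ∈ (univ : Finset (Fin L)).powersetCard k, (∏ m ∈ I, a m) = t ^ k := by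
        intro I hI
        rw [Finset.prod_congr rfl fun m _ => hat m, Finset.prod_const,
          (mem_powersetCard.1 hI).2]
      rw [Finset.sum_congr rfl h4, Finset.sum_const, card_powersetCard, Finset.card_fin,
        nsmul_eq_mul]
    rw [h3]; ring

theorem regularizer_min_at_balanced_factorization
    (L : ℕ) (hL : 1 ≤ L) (η : ℝ) (hη : 0 < η) (W : ℝ) (hW : W ≠ 0)
    (V : Fin L → ℝ) (hV : ∏ ℓ, V ℓ = W) :
    (∑ m ∈ Finset.range L,
        (L.choose m : ℝ) * η ^ (2 * (L - m)) * |W| ^ ((2 * m : ℝ) / L))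
      ≤ ∑ I ∈ (Finset.univ : Finset (Fin L)).powerset.erase Finset.univ,
          η ^ (2 * (L - I.card)) * ∏ m ∈ I, (V m) ^ 2
    ∧ ((∑ I ∈ (Finset.univ : Finset (Fin L)).powerset.erase Finset.univ,
          η ^ (2 * (L - I.card)) * ∏ m ∈ I, (V m) ^ 2)
        = ∑ m ∈ Finset.range L,
            (L.choose m : ℝ) * η ^ (2 * (L - m)) * |W| ^ ((2 * m : ℝ) / L)
      ↔ ∀ ℓ m, (V ℓ) ^ 2 = (V m) ^ 2) := by
  classical
  have hVne : ∀ m, V m ≠ 0 := by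
    intro m hm
    exact hW (hV ▸ Finset.prod_eq_zero (mem_univ m) hm)
  have ha : ∀ m, 0 < (fun m => V m ^ 2) m := fun m => by
    have h := hVne m
    show (0:ℝ) < V m ^ 2
    positivity
  have hLR : (0:ℝ) < (L:ℝ) := by exact_mod_cast hL
  have hWpos : 0 < |W| := abs_pos.mpr hW
  set t : ℝ := |W| ^ ((2:ℝ)/(L:ℝ)) with ht_def
  have ht : 0 < t := Real.rpow_pos_of_pos hWpos _
  have hprod : (∏ m, (fun m => V m ^ 2) m) = t ^ L := by
    have h1 : (∏ m, V m ^ 2) = W ^ 2 := by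
      rw [← hV]; exact Finset.prod_pow univ 2 V
    have h2 : t ^ L = W ^ 2 := by
      rw [ht_def, ← Real.rpow_natCast (|W| ^ ((2:ℝ)/(L:ℝ))) L,
        ← Real.rpow_mul (abs_nonneg W), div_mul_cancel₀ _ hLR.ne', ← sq_abs,
        ← Real.rpow_natCast |W| 2]
      norm_num
    simpa [h2] using h1
  have htW : ∀ m : ℕ, |W| ^ ((2 * (m:ℝ)) / (L:ℝ)) = t ^ m := by
    intro m
    rw [ht_def, ← Real.rpow_natCast (|W| ^ ((2:ℝ)/(L:ℝ))) m, ← Real.rpow_mul (abs_nonneg W)]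
    congr 1
    ring
  obtain ⟨hineq, hiff⟩ := regularizer_main_aux L hL η hη (fun m => V m ^ 2) ha t ht hprod
  have hLsum : (∑ m ∈ Finset.range L,
        (L.choose m : ℝ) * η ^ (2 * (L - m)) * |W| ^ ((2 * m : ℝ) / L))
      = ∑ k ∈ Finset.range L, (L.choose k : ℝ) * η ^ (2*(L-k)) * t ^ k :=
    Finset.sum_congr rfl fun m _ => by rw [htW m]
  rw [hLsum]
  exact ⟨hineq, hiff⟩
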